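/- Let φ : ℝ → ℂ be a Schwartz function whose Fourier transform φ̂ is supported in (−1,1). Then for every N ≥ 1 there exists a constant C_N > 0 such that for all t ≥ 0 and all x ∈ ℝ with |x| > 2t, one has |∫_ℝ φ̂(ξ) e^{−iπtξ² + 2πi xξ} dξ| ≤ C_N |x|^{−N}. -/

import Mathlib

open FourierTransform

noncomputable section

namespace NSP

open MeasureTheory Set Function intervalIntegral
open scoped ContDiff

variable (f : ContDiffBump (0:ℝ))

/-- smooth antiderivative of a bump -/
def anti (ξ : ℝ) : ℝ := ∫ u in (0:ℝ)..ξ, f u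

lemma anti_hasDerivAt (ξ : ℝ) : HasDerivAt (anti f) (f ξ) ξ :=
  intervalIntegral.integral_hasDerivAt_right
    (f.continuous.intervalIntegrable _ _)
    f.continuous.aestronglyMeasurable.stronglyMeasurableAtFilter
    f.continuous.continuousAt

lemma anti_contDiff : ContDiff ℝ ∞ (anti f) := by
  rw [contDiff_infty_iff_deriv]
  have hd : ∀ ξ, deriv (anti f) ξ = f ξ := fun ξ => (anti_hasDerivAt f ξ).deriv
  refine ⟨fun ξ => (anti_hasDerivAt f ξ).differentiableAt, ?_⟩
  have : deriv (anti f) = ⇑f := funext hd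
  rw [this]
  exact f.contDiff

lemma anti_eq_id {ξ : ℝ} (hξ : |ξ| ≤ f.rIn) : anti f ξ = ξ := by
  have h : EqOn (fun u : ℝ => f u) (fun _ => (1:ℝ)) (uIcc 0 ξ) := by
    intro u hu
    apply f.one_of_mem_closedBall
    have := abs_le.mp hξ
    rcases mem_uIcc.mp hu with h1 | h1
    · simp only [Metric.mem_closedBall, Real.dist_eq, sub_zero]
      rw [abs_le]
      constructor
      · linarith [h1.1, f.rIn_pos.le]
      · exact h1.2.trans (le_abs_self ξ |>.trans hξ)
    · simp only [Metric.mem_closedBall, Real.dist_eq, sub_zero]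
      rw [abs_le]
      constructor
      · exact le_trans (by linarith [neg_abs_le ξ]) h1.1
      · linarith [h1.2]
  rw [anti, intervalIntegral.integral_congr h]
  simp

lemma anti_nonneg_le {ξ : ℝ} (hξ : 0 ≤ ξ) : 0 ≤ anti f ξ ∧ anti f ξ ≤ f.rOut := by
  constructor
  · exact intervalIntegral.integral_nonneg hξ (fun u _ => f.nonneg)
  · rcases le_or_gt ξ f.rOut with h | h
    · calc anti f ξ ≤ ∫ u in (0:ℝ)..ξ, (1:ℝ) := by
            apply intervalIntegral.integral_mono_on hξ
              (f.continuous.intervalIntegrable _ _) (intervalIntegrable_const)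
            exact fun u _ => f.le_one
        _ = ξ := by simp
        _ ≤ f.rOut := h
    · have hsplit : anti f ξ = (∫ u in (0:ℝ)..f.rOut, f u) + ∫ u in f.rOut..ξ, f u := by
        rw [anti, intervalIntegral.integral_add_adjacent_intervals
          (f.continuous.intervalIntegrable _ _) (f.continuous.intervalIntegrable _ _)]
      have h2 : (∫ u in f.rOut..ξ, f u) = 0 := by
        have h : EqOn (fun u : ℝ => f u) (fun _ => (0:ℝ)) (uIcc f.rOut ξ) := by
          intro u hu
          apply f.zero_of_le_dist
          rw [uIcc_of_le h.le] at hu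
          simp only [Real.dist_eq, sub_zero]
          exact le_trans hu.1 (le_abs_self u)
        rw [intervalIntegral.integral_congr h]; simp
      have h3 : (∫ u in (0:ℝ)..f.rOut, f u) ≤ f.rOut := by
        calc (∫ u in (0:ℝ)..f.rOut, f u) ≤ ∫ u in (0:ℝ)..f.rOut, (1:ℝ) := by
              apply intervalIntegral.integral_mono_on (f.rIn_pos.trans f.rIn_lt_rOut).le
                (f.continuous.intervalIntegrable _ _) (intervalIntegrable_const)
              exact fun u _ => f.le_one
          _ = f.rOut := by simp
      rw [hsplit, h2, add_zero]; exact h3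

lemma abs_anti_le (ξ : ℝ) : |anti f ξ| ≤ f.rOut := by
  rcases le_or_gt 0 ξ with h | h
  · obtain ⟨h1, h2⟩ := anti_nonneg_le f h
    rwa [abs_of_nonneg h1]
  · have hneg : anti f ξ = -(anti f (-ξ)) := by
      rw [anti, anti]
      have h1 : (∫ u in (0:ℝ)..(-ξ), f u) = ∫ u in (0:ℝ)..(-ξ), f (-u) :=
        intervalIntegral.integral_congr (fun u _ => (f.neg u).symm)
      rw [h1, intervalIntegral.integral_comp_neg, neg_neg, neg_zero,
        intervalIntegral.integral_symm]
    obtain ⟨h1, h2⟩ := anti_nonneg_le f (by linarith : (0:ℝ) ≤ -ξ)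
    rw [hneg, abs_neg, abs_of_nonneg h1]
    exact h2


def bump1 : ContDiffBump (0:ℝ) := ⟨1, 3/2, by norm_num, by norm_num⟩
def bump2 : ContDiffBump (0:ℝ) := ⟨1/2, 3/5, by norm_num, by norm_num⟩

def sg : ℝ → ℝ := anti bump1
def ta : ℝ → ℝ := anti bump2

lemma sg_eq {ξ : ℝ} (h : |ξ| ≤ 1) : sg ξ = ξ := anti_eq_id bump1 h
lemma ta_eq {s : ℝ} (h : |s| ≤ 1/2) : ta s = s := anti_eq_id bump2 h
lemma abs_sg_le (ξ : ℝ) : |sg ξ| ≤ 3/2 := abs_anti_le bump1 ξ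
lemma abs_ta_le (s : ℝ) : |ta s| ≤ 3/5 := abs_anti_le bump2 s
lemma sg_contDiff : ContDiff ℝ ∞ sg := anti_contDiff bump1
lemma ta_contDiff : ContDiff ℝ ∞ ta := anti_contDiff bump2

/-- the regularized denominator -/
def den (p : ℝ × ℝ) : ℝ := 2 * Real.pi * (1 - ta p.1 * sg p.2)

lemma den_pos (p : ℝ × ℝ) : 0 < den p := by
  have h1 : |ta p.1 * sg p.2| ≤ 9/10 := by
    rw [abs_mul]
    calc |ta p.1| * |sg p.2| ≤ (3/5) * (3/2) :=
          mul_le_mul (abs_ta_le p.1) (abs_sg_le p.2) (abs_nonneg _) (by norm_num)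
      _ = 9/10 := by norm_num
  have h2 : (1:ℝ)/10 ≤ 1 - ta p.1 * sg p.2 := by
    have := abs_le.mp h1
    linarith [this.2]
  have h3 : (0:ℝ) < 2 * Real.pi := by positivity
  exact mul_pos h3 (by linarith)

lemma den_ne (p : ℝ × ℝ) : den p ≠ 0 := (den_pos p).ne'

lemma den_contDiff : ContDiff ℝ ∞ den := by
  unfold den
  exact contDiff_const.mul
    (contDiff_const.sub ((ta_contDiff.comp contDiff_fst).mul (sg_contDiff.comp contDiff_snd)))

/-- regularized reciprocal of the phase derivative (up to `x`) -/
def H (p : ℝ × ℝ) : ℂ := ((den p)⁻¹ : ℝ)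

lemma H_contDiff : ContDiff ℝ ∞ H :=
  Complex.ofRealCLM.contDiff.comp (den_contDiff.inv den_ne)

/-- partial derivative in the second variable -/
def D (f : ℝ × ℝ → ℂ) (p : ℝ × ℝ) : ℂ := fderiv ℝ f p (0, 1)

lemma D_contDiff {f : ℝ × ℝ → ℂ} (hf : ContDiff ℝ ∞ f) : ContDiff ℝ ∞ (D f) := by
  have h1 : ContDiff ℝ ∞ (fderiv ℝ f) := hf.fderiv_right (le_of_eq rfl)
  exact (ContinuousLinearMap.apply ℝ ℂ ((0:ℝ), (1:ℝ))).contDiff.comp h1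

lemma D_hasDerivAt {f : ℝ × ℝ → ℂ} (hf : Differentiable ℝ f) (s ξ : ℝ) :
    HasDerivAt (fun y => f (s, y)) (D f (s, ξ)) ξ := by
  have h1 : HasDerivAt (fun y : ℝ => ((s, y) : ℝ × ℝ)) ((0:ℝ), (1:ℝ)) ξ :=
    (hasDerivAt_const ξ s).prodMk (hasDerivAt_id ξ)
  exact (hf (s, ξ)).hasFDerivAt.comp_hasDerivAt ξ h1

variable (φ : SchwartzMap ℝ ℂ)

/-- the iterated amplitudes -/
def A : ℕ → (ℝ × ℝ → ℂ)
  | 0 => fun p => 𝓕 (⇑φ) p.2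
  | (k+1) => D (fun p => A k p * H p)

lemma fourier_smooth : ContDiff ℝ ∞ (𝓕 (⇑φ)) := by
  have : 𝓕 (⇑φ) = ⇑(𝓕 φ : SchwartzMap ℝ ℂ) := by
    rw [SchwartzMap.fourier_coe]
  rw [this]
  exact (𝓕 φ : SchwartzMap ℝ ℂ).smooth ⊤

lemma A_contDiff : ∀ k, ContDiff ℝ ∞ (A φ k)
  | 0 => (fourier_smooth φ).comp contDiff_snd
  | (k+1) => D_contDiff ((A_contDiff k).mul H_contDiff)

lemma A_zero (hsupp : Function.support (𝓕 (⇑φ)) ⊆ Set.Ioo (-1 : ℝ) 1) :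
    ∀ k (p : ℝ × ℝ), 1 < |p.2| → A φ k p = 0 := by
  intro k
  induction k with
  | zero =>
    intro p hp
    by_contra h
    have := hsupp h
    rw [Set.mem_Ioo] at this
    rcases lt_abs.mp hp with h1 | h1 <;> linarith [this.1, this.2]
  | succ k ih =>
    intro p hp
    have hopen : IsOpen {q : ℝ × ℝ | 1 < |q.2|} :=
      isOpen_lt continuous_const ((continuous_abs).comp continuous_snd)
    have hev : (fun q => A φ k q * H q) =ᶠ[nhds p] (fun _ => (0:ℂ)) := by
      filter_upwards [hopen.mem_nhds hp] with q hq
      rw [ih q hq, zero_mul]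
    show D (fun q => A φ k q * H q) p = 0
    rw [D, hev.fderiv_eq, fderiv_fun_const]
    simp

lemma A_bound (k : ℕ) (hsupp : Function.support (𝓕 (⇑φ)) ⊆ Set.Ioo (-1 : ℝ) 1) :
    ∃ M : ℝ, 0 ≤ M ∧ ∀ s ξ : ℝ, |s| ≤ 1 → ‖A φ k (s, ξ)‖ ≤ M := by
  have hK : IsCompact ((Set.Icc (-1:ℝ) 1) ×ˢ (Set.Icc (-1:ℝ) 1)) :=
    isCompact_Icc.prod isCompact_Icc
  obtain ⟨C, hC⟩ := hK.exists_bound_of_continuousOn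
    ((A_contDiff φ k).continuous.continuousOn)
  refine ⟨max C 0, le_max_right _ _, ?_⟩
  intro s ξ hs
  rcases le_or_gt (|ξ|) 1 with h | h
  · have hmem : (s, ξ) ∈ (Set.Icc (-1:ℝ) 1) ×ˢ (Set.Icc (-1:ℝ) 1) :=
      ⟨Set.mem_Icc.mpr (abs_le.mp hs), Set.mem_Icc.mpr (abs_le.mp h)⟩
    exact (hC _ hmem).trans (le_max_left _ _)
  · rw [A_zero φ hsupp k (s, ξ) h]
    simp



lemma A_zero_def (φ : SchwartzMap ℝ ℂ) (p : ℝ × ℝ) : A φ 0 p = 𝓕 (⇑φ) p.2 := rfl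

lemma A_succ_def (φ : SchwartzMap ℝ ℂ) (k : ℕ) :
    A φ (k+1) = D (fun p => A φ k p * H p) := rfl

section Phase

variable (t x : ℝ)

/-- the phase factor -/
def e (ξ : ℝ) : ℂ :=
  Complex.exp (Complex.I * ((-(Real.pi * t * ξ ^ 2) + 2 * Real.pi * x * ξ : ℝ) : ℂ))

lemma e_hasDerivAt (ξ : ℝ) :
    HasDerivAt (e t x)
      (e t x ξ * (Complex.I * ((2 * Real.pi * x - 2 * Real.pi * t * ξ : ℝ) : ℂ))) ξ := by
  have h1 : HasDerivAt (fun ξ : ℝ => -(Real.pi * t * ξ ^ 2) + 2 * Real.pi * x * ξ)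
      (2 * Real.pi * x - 2 * Real.pi * t * ξ) ξ := by
    have hp : HasDerivAt (fun y : ℝ => y ^ 2) (2 * ξ) ξ := by
      simpa using hasDerivAt_pow 2 ξ
    have h := ((hp.const_mul (Real.pi * t)).neg).add
      ((hasDerivAt_id ξ).const_mul (2 * Real.pi * x))
    simp only [id_eq] at h
    exact h.congr_deriv (by ring)
  exact (h1.ofReal_comp.const_mul Complex.I).cexp

lemma abs_e (ξ : ℝ) : ‖e t x ξ‖ = 1 := by
  rw [e, Complex.norm_exp]
  have h : (Complex.I * ((-(Real.pi * t * ξ ^ 2) + 2 * Real.pi * x * ξ : ℝ) : ℂ)).re = 0 := by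
    simp only [Complex.mul_re, Complex.I_re, Complex.I_im, Complex.ofReal_re,
      Complex.ofReal_im]
    ring
  rw [h, Real.exp_zero]

lemma e_continuous : Continuous (e t x) :=
  Complex.continuous_exp.comp (continuous_const.mul
    (Complex.continuous_ofReal.comp (by continuity)))

end Phase

section Main

variable (φ : SchwartzMap ℝ ℂ)
  (hsupp : Function.support (𝓕 (⇑φ)) ⊆ Set.Ioo (-1 : ℝ) 1)
  (t x : ℝ) (ht : 0 ≤ t) (htx : 2 * t < |x|) (hx1 : 1 ≤ |x|)

include htx ht

lemma hx0 : x ≠ 0 := by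
  intro h; rw [h] at htx; simp at htx; linarith

lemma hs_half : |t / x| ≤ 1 / 2 := by
  rw [abs_div]
  rw [div_le_iff₀ (by linarith : (0:ℝ) < |x|)]
  rw [abs_of_nonneg ht]
  linarith

include hsupp

lemma step (k : ℕ) :
    (∫ ξ in (-2:ℝ)..2, A φ k (t/x, ξ) * e t x ξ)
      = Complex.I * (x:ℂ)⁻¹ * ∫ ξ in (-2:ℝ)..2, A φ (k+1) (t/x, ξ) * e t x ξ := by
  have hx0' : x ≠ 0 := hx0 t x ht htx
  have hs : |t / x| ≤ 1 / 2 := hs_half t x ht htx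
  set s : ℝ := t / x with hs_def
  -- the integrands
  set u : ℝ → ℂ := fun ξ => (x:ℂ)⁻¹ * (A φ k (s, ξ) * H (s, ξ)) with hu_def
  set u' : ℝ → ℂ := fun ξ => (x:ℂ)⁻¹ * A φ (k+1) (s, ξ) with hu'_def
  set v' : ℝ → ℂ := fun ξ =>
    e t x ξ * (Complex.I * ((2 * Real.pi * x - 2 * Real.pi * t * ξ : ℝ) : ℂ)) with hv'_def
  have hdiffAH : Differentiable ℝ (fun p => A φ k p * H p) :=
    ((A_contDiff φ k).mul H_contDiff).differentiable (by simp)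
  have hu : ∀ ξ ∈ uIcc (-2:ℝ) 2, HasDerivAt u (u' ξ) ξ := by
    intro ξ _
    have h := (D_hasDerivAt hdiffAH s ξ).const_mul ((x:ℂ)⁻¹)
    rw [← A_succ_def] at h
    exact h
  have hv : ∀ ξ ∈ uIcc (-2:ℝ) 2, HasDerivAt (e t x) (v' ξ) ξ :=
    fun ξ _ => e_hasDerivAt t x ξ
  have hcontA : ∀ j, Continuous (fun ξ : ℝ => A φ j (s, ξ)) := fun j =>
    (A_contDiff φ j).continuous.comp (continuous_const.prodMk continuous_id)
  have hu'int : IntervalIntegrable u' volume (-2:ℝ) 2 :=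
    (continuous_const.mul (hcontA (k+1))).intervalIntegrable _ _
  have hv'int : IntervalIntegrable v' volume (-2:ℝ) 2 :=
    ((e_continuous t x).mul (continuous_const.mul
      (Complex.continuous_ofReal.comp (by continuity)))).intervalIntegrable _ _
  have hibp := intervalIntegral.integral_deriv_mul_eq_sub hu hv hu'int hv'int
  have hbd2 : u 2 = 0 := by
    show (x:ℂ)⁻¹ * (A φ k (s, 2) * H (s, 2)) = 0
    rw [A_zero φ hsupp k (s, 2) (by norm_num)]
    ring
  have hbdm2 : u (-2) = 0 := by
    show (x:ℂ)⁻¹ * (A φ k (s, -2) * H (s, -2)) = 0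
    rw [A_zero φ hsupp k (s, -2) (by rw [abs_neg]; norm_num)]
    ring
  have hzero : (∫ ξ in (-2:ℝ)..2, (u' ξ * e t x ξ + u ξ * v' ξ)) = 0 := by
    rw [hibp, hbd2, hbdm2]
    ring
  have hHcont : Continuous (fun ξ : ℝ => H (s, ξ)) :=
    H_contDiff.continuous.comp (continuous_const.prodMk continuous_id)
  have hint1 : IntervalIntegrable (fun ξ => u' ξ * e t x ξ) volume (-2:ℝ) 2 :=
    ((continuous_const.mul (hcontA (k+1))).mul (e_continuous t x)).intervalIntegrable _ _
  have hint2 : IntervalIntegrable (fun ξ => u ξ * v' ξ) volume (-2:ℝ) 2 := by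
    apply Continuous.intervalIntegrable
    exact (continuous_const.mul ((hcontA k).mul hHcont)).mul
      ((e_continuous t x).mul (continuous_const.mul
        (Complex.continuous_ofReal.comp (by continuity))))
  have hsplit : (∫ ξ in (-2:ℝ)..2, (u' ξ * e t x ξ + u ξ * v' ξ))
      = (∫ ξ in (-2:ℝ)..2, u' ξ * e t x ξ) + ∫ ξ in (-2:ℝ)..2, u ξ * v' ξ :=
    intervalIntegral.integral_add hint1 hint2
  -- pointwise identity
  have hpoint : ∀ ξ : ℝ, u ξ * v' ξ = Complex.I * (A φ k (s, ξ) * e t x ξ) := by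
    intro ξ
    rcases le_or_gt (|ξ|) 1 with h | h
    · have hσ : sg ξ = ξ := sg_eq h
      have hτ : ta s = s := ta_eq hs
      have hden : den (s, ξ) = 2 * Real.pi * (1 - s * ξ) := by
        rw [show den (s, ξ) = 2 * Real.pi * (1 - ta s * sg ξ) from rfl, hτ, hσ]
      have h1ne : (1 - s * ξ) ≠ 0 := by
        have habs : |s * ξ| ≤ 1/2 := by
          rw [abs_mul]
          calc |s| * |ξ| ≤ (1/2) * 1 := mul_le_mul hs h (abs_nonneg _) (by norm_num)
            _ = 1/2 := by norm_num
        have := abs_le.mp habs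
        intro hc
        have : s * ξ = 1 := by linarith
        linarith [this ▸ (abs_le.mp habs).2]
      have key : ((x:ℂ))⁻¹ * H (s, ξ) * ((2 * Real.pi * x - 2 * Real.pi * t * ξ : ℝ) : ℂ) = 1 := by
        have keyR : (x⁻¹ * (den (s, ξ))⁻¹ * (2 * Real.pi * x - 2 * Real.pi * t * ξ) : ℝ) = 1 := by
          have hpi := Real.pi_ne_zero
          rw [hden]
          have hfac : 2 * Real.pi * x - 2 * Real.pi * t * ξ
              = 2 * Real.pi * x * (1 - s * ξ) := by
            rw [hs_def]
            field_simp
          rw [hfac]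
          have hne2 : 2 * Real.pi * x * (1 - s * ξ) ≠ 0 :=
            mul_ne_zero (mul_ne_zero (mul_ne_zero two_ne_zero hpi) hx0') h1ne
          have hne3 : 2 * Real.pi * (1 - s * ξ) ≠ 0 :=
            mul_ne_zero (mul_ne_zero two_ne_zero hpi) h1ne
          field_simp
        calc ((x:ℂ))⁻¹ * H (s, ξ) * ((2 * Real.pi * x - 2 * Real.pi * t * ξ : ℝ) : ℂ)
            = ((x⁻¹ * (den (s, ξ))⁻¹ * (2 * Real.pi * x - 2 * Real.pi * t * ξ) : ℝ) : ℂ) := by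
              push_cast
              rw [show H (s, ξ) = (((den (s, ξ))⁻¹ : ℝ) : ℂ) from rfl]
              push_cast
              ring
          _ = 1 := by rw [keyR]; norm_num
      show (x:ℂ)⁻¹ * (A φ k (s, ξ) * H (s, ξ))
          * (e t x ξ * (Complex.I * ((2 * Real.pi * x - 2 * Real.pi * t * ξ : ℝ) : ℂ)))
          = Complex.I * (A φ k (s, ξ) * e t x ξ)
      linear_combination (A φ k (s, ξ) * e t x ξ * Complex.I) * key
    · show (x:ℂ)⁻¹ * (A φ k (s, ξ) * H (s, ξ))
          * (e t x ξ * (Complex.I * ((2 * Real.pi * x - 2 * Real.pi * t * ξ : ℝ) : ℂ)))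
          = Complex.I * (A φ k (s, ξ) * e t x ξ)
      rw [A_zero φ hsupp k (s, ξ) h]
      ring
  have h5 : (∫ ξ in (-2:ℝ)..2, u ξ * v' ξ)
      = Complex.I * ∫ ξ in (-2:ℝ)..2, A φ k (s, ξ) * e t x ξ := by
    rw [← intervalIntegral.integral_const_mul]
    exact intervalIntegral.integral_congr (fun ξ _ => hpoint ξ)
  have h6 : (∫ ξ in (-2:ℝ)..2, u' ξ * e t x ξ)
      = (x:ℂ)⁻¹ * ∫ ξ in (-2:ℝ)..2, A φ (k+1) (s, ξ) * e t x ξ := by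
    rw [← intervalIntegral.integral_const_mul]
    exact intervalIntegral.integral_congr (fun ξ _ => by
      show u' ξ * e t x ξ = (x:ℂ)⁻¹ * (A φ (k+1) (s, ξ) * e t x ξ)
      rw [hu'_def]
      ring)
  have hfin : (x:ℂ)⁻¹ * (∫ ξ in (-2:ℝ)..2, A φ (k+1) (s, ξ) * e t x ξ)
      + Complex.I * (∫ ξ in (-2:ℝ)..2, A φ k (s, ξ) * e t x ξ) = 0 := by
    rw [← h6, ← h5, ← hsplit]
    exact hzero
  have hI : Complex.I * Complex.I = -1 := Complex.I_mul_I
  linear_combination (-Complex.I) * hfin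
    + (∫ ξ in (-2:ℝ)..2, A φ k (s, ξ) * e t x ξ) * hI

lemma iter (n : ℕ) :
    (∫ ξ in (-2:ℝ)..2, A φ 0 (t/x, ξ) * e t x ξ)
      = (Complex.I * (x:ℂ)⁻¹)^n * ∫ ξ in (-2:ℝ)..2, A φ n (t/x, ξ) * e t x ξ := by
  induction n with
  | zero => simp
  | succ n ih =>
    rw [ih, step φ hsupp t x ht htx n]
    ring


end Main

theorem main (φ : SchwartzMap ℝ ℂ)
    (hsupp : Function.support (𝓕 (⇑φ)) ⊆ Set.Ioo (-1 : ℝ) 1) :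
    ∀ N : ℝ, 1 ≤ N → ∃ C : ℝ, 0 < C ∧
      ∀ t x : ℝ, 0 ≤ t → 2 * t < |x| →
        ‖(∫ ξ : ℝ, 𝓕 (⇑φ) ξ *
            Complex.exp (Complex.I *
              ((-(Real.pi * t * ξ ^ 2) + 2 * Real.pi * x * ξ : ℝ) : ℂ)))‖
          ≤ C * |x| ^ (-N) := by
  intro N hN
  set n : ℕ := ⌈N⌉₊ with hn_def
  obtain ⟨M, hM0, hM⟩ := A_bound φ n hsupp
  set M0 : ℝ := ∫ ξ : ℝ, ‖𝓕 (⇑φ) ξ‖ with hM0_def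
  have hM00 : 0 ≤ M0 := integral_nonneg (fun ξ => norm_nonneg _)
  refine ⟨max M0 (4 * M) + 1, by positivity, ?_⟩
  intro t x ht htx
  have hx0 : (0:ℝ) < |x| := lt_of_le_of_lt (by linarith) htx
  have hintegrand : ∀ ξ : ℝ, 𝓕 (⇑φ) ξ * Complex.exp (Complex.I *
        ((-(Real.pi * t * ξ ^ 2) + 2 * Real.pi * x * ξ : ℝ) : ℂ))
      = A φ 0 (t/x, ξ) * e t x ξ := by
    intro ξ
    rw [A_zero_def]
    rfl
  have hrpow_nonneg : (0:ℝ) ≤ |x| ^ (-N) := Real.rpow_nonneg hx0.le _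
  rcases le_or_gt 1 (|x|) with hx1 | hx1
  · -- main case : |x| ≥ 1
    have hsub : Function.support (fun ξ => A φ 0 (t/x, ξ) * e t x ξ)
        ⊆ Set.Ioc (-2:ℝ) 2 := by
      intro ξ hξ
      have h1 : A φ 0 (t/x, ξ) ≠ 0 := fun h => hξ (by simp [h])
      rw [A_zero_def] at h1
      have := hsupp h1
      rw [Set.mem_Ioo] at this
      exact Set.mem_Ioc.mpr ⟨by linarith [this.1], by linarith [this.2]⟩
    have hJ : (∫ ξ : ℝ, 𝓕 (⇑φ) ξ * Complex.exp (Complex.I *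
          ((-(Real.pi * t * ξ ^ 2) + 2 * Real.pi * x * ξ : ℝ) : ℂ)))
        = ∫ ξ in (-2:ℝ)..2, A φ 0 (t/x, ξ) * e t x ξ := by
      rw [intervalIntegral.integral_eq_integral_of_support_subset hsub]
      exact MeasureTheory.integral_congr_ae (Filter.Eventually.of_forall hintegrand)
    rw [hJ, iter φ hsupp t x ht htx n]
    rw [norm_mul, norm_pow, norm_mul, Complex.norm_I, norm_inv, Complex.norm_real, Real.norm_eq_abs, one_mul]
    have hbound : ‖∫ ξ in (-2:ℝ)..2, A φ n (t/x, ξ) * e t x ξ‖ ≤ M * 4 := by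
      have h := intervalIntegral.norm_integral_le_of_norm_le_const
        (C := M) (f := fun ξ => A φ n (t/x, ξ) * e t x ξ) (a := (-2:ℝ)) (b := 2) ?_
      · calc ‖∫ ξ in (-2:ℝ)..2, A φ n (t/x, ξ) * e t x ξ‖ ≤ M * |2 - (-2)| := h
          _ = M * 4 := by norm_num
      · intro ξ _
        rw [norm_mul, abs_e, mul_one]
        exact hM (t/x) ξ ((hs_half t x ht htx).trans (by norm_num))
    have hpow : |x|⁻¹ ^ n = |x| ^ (-(n:ℝ)) := by
      rw [inv_pow, ← Real.rpow_natCast, ← Real.rpow_neg hx0.le]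
    have hpow2 : |x| ^ (-(n:ℝ)) ≤ |x| ^ (-N) :=
      Real.rpow_le_rpow_of_exponent_le hx1 (neg_le_neg (Nat.le_ceil N))
    calc |x|⁻¹ ^ n * ‖∫ ξ in (-2:ℝ)..2, A φ n (t/x, ξ) * e t x ξ‖
        ≤ |x| ^ (-N) * (M * 4) := by
          rw [hpow]
          exact mul_le_mul hpow2 hbound (norm_nonneg _) hrpow_nonneg
      _ ≤ (max M0 (4 * M) + 1) * |x| ^ (-N) := by
          rw [mul_comm]
          apply mul_le_mul_of_nonneg_right _ hrpow_nonneg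
          calc M * 4 = 4 * M := by ring
            _ ≤ max M0 (4 * M) := le_max_right _ _
            _ ≤ max M0 (4 * M) + 1 := by linarith
  · -- small case : |x| < 1
    have h1 : ‖∫ ξ : ℝ, 𝓕 (⇑φ) ξ * Complex.exp (Complex.I *
          ((-(Real.pi * t * ξ ^ 2) + 2 * Real.pi * x * ξ : ℝ) : ℂ))‖ ≤ M0 := by
      refine (MeasureTheory.norm_integral_le_integral_norm _).trans (le_of_eq ?_)
      apply MeasureTheory.integral_congr_ae
      apply Filter.Eventually.of_forall
      intro ξ
      show ‖𝓕 (⇑φ) ξ * Complex.exp (Complex.I *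
        ((-(Real.pi * t * ξ ^ 2) + 2 * Real.pi * x * ξ : ℝ) : ℂ))‖ = ‖𝓕 (⇑φ) ξ‖
      rw [hintegrand ξ, norm_mul, abs_e, mul_one,
        A_zero_def]
    have h2 : (1:ℝ) ≤ |x| ^ (-N) :=
      Real.one_le_rpow_of_pos_of_le_one_of_nonpos hx0 hx1.le (by linarith)
    calc ‖_‖ ≤ M0 := h1
      _ = M0 * 1 := by ring
      _ ≤ (max M0 (4 * M) + 1) * |x| ^ (-N) := by
          apply mul_le_mul _ h2 zero_le_one (by positivity)
          calc M0 ≤ max M0 (4 * M) := le_max_left _ _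
            _ ≤ max M0 (4 * M) + 1 := by linarith


end NSP

end

/-- **Non-stationary phase decay for the free Schrödinger evolution.** If `φ : ℝ → ℂ` is a
Schwartz function whose Fourier transform is supported in `(−1, 1)`, then for every `N ≥ 1`
there is a constant `C_N > 0` such that for all `t ≥ 0` and all `x` with `|x| > 2t`,
`|∫ φ̂(ξ) e^{−iπtξ² + 2πixξ} dξ| ≤ C_N |x|^{−N}`. -/
theorem nonstationary_phase_decay (φ : SchwartzMap ℝ ℂ)
    (hsupp : Function.support (𝓕 (⇑φ)) ⊆ Set.Ioo (-1 : ℝ) 1) :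
    ∀ N : ℝ, 1 ≤ N → ∃ C : ℝ, 0 < C ∧
      ∀ t x : ℝ, 0 ≤ t → 2 * t < |x| →
        ‖(∫ ξ : ℝ, 𝓕 (⇑φ) ξ *
            Complex.exp (Complex.I *
              ((-(Real.pi * t * ξ ^ 2) + 2 * Real.pi * x * ξ : ℝ) : ℂ)))‖
          ≤ C * |x| ^ (-N) := NSP.main φ hsupp
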